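/- Let v : ℝ³ × ℝ → ℝ³ and p : ℝ³ × ℝ → ℝ satisfy the incompressible Euler equations ∂v/∂t + Dv·v = −grad p everywhere, with v continuously differentiable. Let k : ℝ³ × ℝ → ℝ be twice continuously differentiable and define the impulse density z := v + grad k. Then z satisfies ∂z/∂t(x,t) − v(x,t) × curl z(x,t) = grad Λ(x,t) for all (x,t), where the gauge Λ is given by Λ = ∂k/∂t − p − ½ v·v. -/

import Mathlib

open Matrix

/-- The Jacobian matrix of a vector field `u : ℝ³ → ℝ³` at `x`:
`(jacAt u x) i j = ∂uᵢ/∂xⱼ (x)`. -/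
noncomputable def jacAt (u : (Fin 3 → ℝ) → (Fin 3 → ℝ)) (x : Fin 3 → ℝ) :
    Matrix (Fin 3) (Fin 3) ℝ :=
  fun i j => fderiv ℝ u x (Pi.single j 1) i

/-- The gradient of a scalar function `f : ℝ³ → ℝ` at `x`. -/
noncomputable def gradAt (f : (Fin 3 → ℝ) → ℝ) (x : Fin 3 → ℝ) : Fin 3 → ℝ :=
  fun i => fderiv ℝ f x (Pi.single i 1)

/-- The curl of a vector field `u : ℝ³ → ℝ³` at `x`. -/
noncomputable def curlAt (u : (Fin 3 → ℝ) → (Fin 3 → ℝ)) (x : Fin 3 → ℝ) : Fin 3 → ℝ :=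
  ![jacAt u x 2 1 - jacAt u x 1 2,
    jacAt u x 0 2 - jacAt u x 2 0,
    jacAt u x 1 0 - jacAt u x 0 1]

/-- The divergence of a vector field `u : ℝ³ → ℝ³` at `x`. -/
noncomputable def divAt (u : (Fin 3 → ℝ) → (Fin 3 → ℝ)) (x : Fin 3 → ℝ) : ℝ :=
  ∑ i, jacAt u x i i

section helpers
variable {G : Type*} [NormedAddCommGroup G] [NormedSpace ℝ G]

lemma hasFDerivAt_fixSnd (f : (Fin 3 → ℝ) × ℝ → G) (x : Fin 3 → ℝ) (t : ℝ)
    (hf : DifferentiableAt ℝ f (x, t)) :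
    HasFDerivAt (fun y => f (y, t))
      ((fderiv ℝ f (x, t)).comp (ContinuousLinearMap.inl ℝ _ _)) x :=
  hf.hasFDerivAt.comp x (hasFDerivAt_prodMk_left x t)

lemma hasDerivAt_fixFst (f : (Fin 3 → ℝ) × ℝ → G) (x : Fin 3 → ℝ) (t : ℝ)
    (hf : DifferentiableAt ℝ f (x, t)) :
    HasDerivAt (fun s => f (x, s)) (fderiv ℝ f (x, t) (0, 1)) t :=
  hf.hasFDerivAt.comp_hasDerivAt t ((hasDerivAt_const t x).prodMk (hasDerivAt_id t))

end helpers

/-- If `v, p` satisfy the incompressible Euler equations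
`∂v/∂t + Dv·v = −grad p`, then the impulse density `z = v + grad k` satisfies
`∂z/∂t − v × curl z = grad Λ` with gauge `Λ = ∂k/∂t − p − ½ v·v`. -/
theorem euler_implies_impulse_gauge
    (v : (Fin 3 → ℝ) × ℝ → (Fin 3 → ℝ)) (p : (Fin 3 → ℝ) × ℝ → ℝ)
    (hv : ContDiff ℝ 1 v)
    (hp : ∀ (x : Fin 3 → ℝ) (t : ℝ), DifferentiableAt ℝ (fun y => p (y, t)) x)
    (heuler : ∀ (x : Fin 3 → ℝ) (t : ℝ),
      deriv (fun s => v (x, s)) t + jacAt (fun y => v (y, t)) x *ᵥ v (x, t)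
        = -gradAt (fun y => p (y, t)) x)
    (k : (Fin 3 → ℝ) × ℝ → ℝ) (hk : ContDiff ℝ 2 k)
    (z : (Fin 3 → ℝ) × ℝ → (Fin 3 → ℝ))
    (hz : ∀ (x : Fin 3 → ℝ) (t : ℝ),
      z (x, t) = v (x, t) + gradAt (fun y => k (y, t)) x)
    (Λ : (Fin 3 → ℝ) × ℝ → ℝ)
    (hΛ : ∀ (x : Fin 3 → ℝ) (t : ℝ),
      Λ (x, t) = deriv (fun s => k (x, s)) t - p (x, t)
        - (1 / 2) * (v (x, t) ⬝ᵥ v (x, t))) :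
    ∀ (x : Fin 3 → ℝ) (t : ℝ),
      deriv (fun s => z (x, s)) t - v (x, t) ⨯₃ curlAt (fun y => z (y, t)) x
        = gradAt (fun y => Λ (y, t)) x := by
  intro x t
  have hvd : Differentiable ℝ v := hv.differentiable one_ne_zero
  have hkd : Differentiable ℝ k := hk.differentiable two_ne_zero
  have hF : ContDiff ℝ 1 (fderiv ℝ k) := hk.fderiv_right (le_refl 2)
  set F := fderiv ℝ k with hFdef
  have hFd : Differentiable ℝ F := hF.differentiable one_ne_zero
  set B := fderiv ℝ F (x, t) with hBdef
  have hBsymm : ∀ a b, B a b = B b a := fun a b =>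
    second_derivative_symmetric (fun y => (hkd y).hasFDerivAt) (hFd (x, t)).hasFDerivAt a b
  set Dv := fderiv ℝ v (x, t) with hDvdef
  have hvx : HasFDerivAt (fun y => v (y, t)) (Dv.comp (ContinuousLinearMap.inl ℝ _ _)) x :=
    hasFDerivAt_fixSnd v x t (hvd _)
  have hJv : ∀ i j, jacAt (fun y => v (y, t)) x i j = Dv (Pi.single j 1, 0) i := by
    intro i j
    simp only [jacAt, hvx.fderiv, ContinuousLinearMap.comp_apply,
      ContinuousLinearMap.inl_apply]
  have hgradk : ∀ (y : Fin 3 → ℝ) (s : ℝ),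
      gradAt (fun y' => k (y', s)) y = fun i => F (y, s) (Pi.single i 1, 0) := by
    intro y s
    funext i
    simp only [gradAt, (hasFDerivAt_fixSnd k y s (hkd _)).fderiv,
      ContinuousLinearMap.comp_apply, ContinuousLinearMap.inl_apply]
    rfl
  -- time derivative of z
  have hzt : (fun s => z (x, s)) = fun s => v (x, s) + fun i => F (x, s) (Pi.single i 1, 0) :=
    funext fun s => by rw [hz, hgradk]
  have hFt : HasDerivAt (fun s => F (x, s)) (B (0, 1)) t := hasDerivAt_fixFst F x t (hFd _)
  have hGt : HasDerivAt (fun s => (fun i => F (x, s) (Pi.single i 1, 0)))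
      (fun i => B (0, 1) (Pi.single i 1, 0)) t := by
    rw [hasDerivAt_pi]
    intro i
    exact (ContinuousLinearMap.apply ℝ ℝ ((Pi.single i 1 : Fin 3 → ℝ),
      (0 : ℝ))).hasFDerivAt.comp_hasDerivAt t hFt
  have hvt : HasDerivAt (fun s => v (x, s)) (Dv (0, 1)) t := hasDerivAt_fixFst v x t (hvd _)
  have hderivz : deriv (fun s => z (x, s)) t
      = Dv (0, 1) + fun i => B (0, 1) (Pi.single i 1, 0) := by
    rw [hzt]
    exact (hvt.add hGt).deriv
  -- spatial Jacobian of z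
  have hFx : HasFDerivAt (fun y => F (y, t)) (B.comp (ContinuousLinearMap.inl ℝ _ _)) x :=
    hasFDerivAt_fixSnd F x t (hFd _)
  have hGx : HasFDerivAt (fun y => (fun i => F (y, t) (Pi.single i 1, 0)))
      (ContinuousLinearMap.pi fun i => (ContinuousLinearMap.apply ℝ ℝ
        ((Pi.single i 1 : Fin 3 → ℝ), (0 : ℝ))).comp
        (B.comp (ContinuousLinearMap.inl ℝ _ _))) x := by
    apply hasFDerivAt_pi''
    intro i
    have h := (ContinuousLinearMap.apply ℝ ℝ ((Pi.single i 1 : Fin 3 → ℝ),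
      (0 : ℝ))).hasFDerivAt.comp x hFx
    convert h using 1
    · rfl
    · rw [ContinuousLinearMap.proj_pi]
  have hzxfun : (fun y => z (y, t)) = fun y => v (y, t) + fun i => F (y, t) (Pi.single i 1, 0) :=
    funext fun y => by rw [hz, hgradk]
  have hzx : HasFDerivAt (fun y => z (y, t))
      ((Dv.comp (ContinuousLinearMap.inl ℝ _ _)) +
        (ContinuousLinearMap.pi fun i => (ContinuousLinearMap.apply ℝ ℝ
          ((Pi.single i 1 : Fin 3 → ℝ), (0 : ℝ))).comp
          (B.comp (ContinuousLinearMap.inl ℝ _ _)))) x := by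
    rw [hzxfun]
    exact hvx.add hGx
  have hjz : ∀ i j, jacAt (fun y => z (y, t)) x i j
      = Dv (Pi.single j 1, 0) i + B (Pi.single j 1, 0) (Pi.single i 1, 0) := by
    intro i j
    simp [jacAt, hzx.fderiv]
  -- Euler componentwise
  have hE : ∀ i, Dv (0, 1) i + ∑ j, Dv (Pi.single j 1, 0) i * v (x, t) j
      = -(gradAt (fun y => p (y, t)) x i) := by
    intro i
    have h := congrFun (heuler x t) i
    rw [hvt.deriv] at h
    simpa [Matrix.mulVec, dotProduct, hJv] using h
  -- gradient of Λ
  have hΛt : (fun y => Λ (y, t))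
      = fun y => F (y, t) (0, 1) - p (y, t) - (1 / 2) * ∑ j, v (y, t) j * v (y, t) j := by
    funext y
    rw [hΛ, (hasDerivAt_fixFst k y t (hkd _)).deriv]
    simp [dotProduct]
    rfl
  have h1x : HasFDerivAt (fun y => F (y, t) (0, 1))
      ((ContinuousLinearMap.apply ℝ ℝ ((0 : Fin 3 → ℝ), (1 : ℝ))).comp
        (B.comp (ContinuousLinearMap.inl ℝ _ _))) x :=
    (ContinuousLinearMap.apply ℝ ℝ ((0 : Fin 3 → ℝ), (1 : ℝ))).hasFDerivAt.comp x hFx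
  have hpx : HasFDerivAt (fun y => p (y, t)) (fderiv ℝ (fun y => p (y, t)) x) x :=
    (hp x t).hasFDerivAt
  have hvjx : ∀ j, HasFDerivAt (fun y => v (y, t) j)
      ((ContinuousLinearMap.proj j).comp (Dv.comp (ContinuousLinearMap.inl ℝ _ _))) x :=
    fun j => by
    exact HasFDerivAt.comp (g := ContinuousLinearMap.proj j) x
      (ContinuousLinearMap.hasFDerivAt _) hvx
  have hqx : HasFDerivAt (fun y => (1 / 2 : ℝ) * ∑ j, v (y, t) j * v (y, t) j)
      ((1 / 2 : ℝ) • ∑ j : Fin 3, (v (x, t) j •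
          ((ContinuousLinearMap.proj j).comp (Dv.comp (ContinuousLinearMap.inl ℝ _ _)))
        + v (x, t) j •
          ((ContinuousLinearMap.proj j).comp (Dv.comp (ContinuousLinearMap.inl ℝ _ _))))) x := by
    exact (HasFDerivAt.sum (u := Finset.univ) (A := fun j y => v (y, t) j * v (y, t) j) (fun j _ => (hvjx j).mul (hvjx j))).const_mul _
  have hgradΛ : ∀ i, gradAt (fun y => Λ (y, t)) x i
      = B (Pi.single i 1, 0) (0, 1) - gradAt (fun y => p (y, t)) x i
        - ∑ j, v (x, t) j * Dv (Pi.single i 1, 0) j := by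
    intro i
    erw [gradAt, hΛt, ((h1x.sub hpx).sub hqx).fderiv]
    simp [gradAt, ContinuousLinearMap.sum_apply, Finset.mul_sum]
    exact Finset.sum_congr rfl fun j _ => by ring
  -- the curl of z
  have hcurl : curlAt (fun y => z (y, t)) x
      = ![Dv (Pi.single 1 1, 0) 2 - Dv (Pi.single 2 1, 0) 1,
          Dv (Pi.single 2 1, 0) 0 - Dv (Pi.single 0 1, 0) 2,
          Dv (Pi.single 0 1, 0) 1 - Dv (Pi.single 1 1, 0) 0] := by
    funext i
    fin_cases i
    · simp only [curlAt, hjz]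
      simp only [Fin.zero_eta, Matrix.cons_val_zero]
      linear_combination hBsymm (Pi.single 1 1, 0) ((Pi.single 2 1 : Fin 3 → ℝ), (0 : ℝ))
    · simp only [curlAt, hjz]
      simp only [Fin.mk_one, Matrix.cons_val_one, Matrix.head_cons, Matrix.cons_val_zero]
      linear_combination hBsymm (Pi.single 2 1, 0) ((Pi.single 0 1 : Fin 3 → ℝ), (0 : ℝ))
    · simp only [curlAt, hjz]
      simp only [show (⟨2, by norm_num⟩ : Fin 3) = 2 from rfl, Matrix.cons_val_two,
        Matrix.tail_cons, Matrix.head_cons]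
      linear_combination hBsymm (Pi.single 0 1, 0) ((Pi.single 1 1 : Fin 3 → ℝ), (0 : ℝ))
  -- final assembly
  funext i
  simp only [hderivz, hcurl, Pi.sub_apply, Pi.add_apply, hgradΛ i, cross_apply,
    Fin.sum_univ_three]
  fin_cases i
  · have hEi := hE 0
    rw [Fin.sum_univ_three] at hEi
    simp only [Fin.zero_eta, Matrix.cons_val_zero, Matrix.cons_val_one, Matrix.head_cons,
      Matrix.cons_val_two, Matrix.tail_cons]
    linear_combination hEi + hBsymm ((0 : Fin 3 → ℝ), (1 : ℝ))
      ((Pi.single 0 1 : Fin 3 → ℝ), (0 : ℝ))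
  · have hEi := hE 1
    rw [Fin.sum_univ_three] at hEi
    simp only [Fin.mk_one, Matrix.cons_val_zero, Matrix.cons_val_one, Matrix.head_cons,
      Matrix.cons_val_two, Matrix.tail_cons]
    linear_combination hEi + hBsymm ((0 : Fin 3 → ℝ), (1 : ℝ))
      ((Pi.single 1 1 : Fin 3 → ℝ), (0 : ℝ))
  · have hEi := hE 2
    rw [Fin.sum_univ_three] at hEi
    simp only [show (⟨2, by norm_num⟩ : Fin 3) = 2 from rfl, Matrix.cons_val_zero,
      Matrix.cons_val_one, Matrix.head_cons, Matrix.cons_val_two, Matrix.tail_cons]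
    linear_combination hEi + hBsymm ((0 : Fin 3 → ℝ), (1 : ℝ))
      ((Pi.single 2 1 : Fin 3 → ℝ), (0 : ℝ))
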